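/- Let $\kappa, \eta : \mathcal{X} \rightsquigarrow \mathcal{Y}$ be finite kernels with $\kappa \le \eta$, where the $\sigma$-algebra of $\mathcal{Y}$ is countably generated. Then there exists a jointly measurable function $d_{\kappa,\eta} : \mathcal{X} \times \mathcal{Y} \to \mathbb{R}$ such that for all $x \in \mathcal{X}$ and all measurable sets $B \subseteq \mathcal{Y}$, $\int_{y \in B} d_{\kappa,\eta}(x,y) \, d\eta(x) = \kappa(x)(B)$. -/

import Mathlib

open MeasureTheory ProbabilityTheory
open scoped ENNReal

/-- Let `κ, η : 𝓧 ↝ 𝓨` be finite kernels with `κ ≤ η`, where the σ-algebra of `𝓨` is countably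
generated. Then there exists a jointly measurable function `d : 𝓧 × 𝓨 → ℝ` such that for all
`x` and all measurable sets `B ⊆ 𝓨`, `∫ y in B, d (x, y) ∂(η x) = κ x B`. -/
theorem kernel_density_exists_of_le
    {𝓧 𝓨 : Type*} [MeasurableSpace 𝓧] [MeasurableSpace 𝓨]
    [MeasurableSpace.CountablyGenerated 𝓨]
    (κ η : Kernel 𝓧 𝓨) [IsFiniteKernel κ] [IsFiniteKernel η]
    (hκη : κ ≤ η) :
    ∃ d : 𝓧 × 𝓨 → ℝ, Measurable d ∧
      ∀ (x : 𝓧) (B : Set 𝓨), MeasurableSet B →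
        ∫ y in B, d (x, y) ∂(η x) = (κ x B).toReal := by
  let κ' : Kernel 𝓧 (𝓨 × Unit) := κ.map (fun y => (y, ()))
  have hm : Measurable (fun y : 𝓨 => (y, ())) := measurable_id.prodMk measurable_const
  have hfst : Kernel.fst κ' = κ := by
    rw [Kernel.fst_map_prod _ measurable_const, Kernel.map_id']
  have hle : Kernel.fst κ' ≤ η := hfst ▸ hκη
  refine ⟨fun p => Kernel.density κ' η p.1 p.2 Set.univ,
    Kernel.measurable_density κ' η MeasurableSet.univ, fun x B hB => ?_⟩
  rw [Kernel.setIntegral_density hle x MeasurableSet.univ hB]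
  rw [measureReal_def, Kernel.map_apply' _ hm _ (hB.prod MeasurableSet.univ)]
  simp
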